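/- arXiv:2504.20916 — 4 statements merged into one kernel-verified Lean document; each statement's English description precedes it below -/
import Mathlib

section
/- Let G be a finite group, let N be a normal subgroup of G, and let ℳ₁ be a subset of the set ℳ_G(N) of maximal G-normal subgroups of N. Then ℳ₁ is minimal in itself if and only if |N| / |⋂_{M ∈ ℳ₁} M| = ∏_{M ∈ ℳ₁} (|N|/|M|), where the intersection over the empty set is taken to be N. -/
/-- `M` is a maximal `G`-normal subgroup of `U`: a normal subgroup of `G` properly contained
in `U` such that no normal subgroup of `G` lies strictly between `M` and `U`.
`maxGNormal U` is the set of all such subgroups (denoted `ℳ_G(U)`). -/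
def maxGNormal {G : Type*} [Group G] (U : Subgroup G) : Set (Subgroup G) :=
  {M | M.Normal ∧ M < U ∧ ∀ V : Subgroup G, V.Normal → M < V → ¬V < U}

/-- The set `ℳ_G(U, V)` of maximal `G`-normal subgroups of `U` that contain `V`. -/
def maxGNormalBtw {G : Type*} [Group G] (U V : Subgroup G) : Set (Subgroup G) :=
  {M | M ∈ maxGNormal U ∧ V ≤ M}

/-- The intersection of a collection `E` of subgroups (all intended to lie below `U`),
with the convention that the intersection over the empty collection is `U`. -/
def interIn {G : Type*} [Group G] (U : Subgroup G) (E : Set (Subgroup G)) : Subgroup G :=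
  U ⊓ sInf E

/-- A collection `ℳ` of (maximal `G`-normal) subgroups of `U` is a minimal subset in itself:
no proper subset `E ⊊ ℳ` has the same intersection as `ℳ` (empty intersection taken as `U`). -/
def MinimalInItself {G : Type*} [Group G] (U : Subgroup G) (ℳ : Set (Subgroup G)) : Prop :=
  ∀ E : Set (Subgroup G), E ⊂ ℳ → interIn U E ≠ interIn U ℳ

section Aux

variable {G : Type*} [Group G]

lemma interIn_empty (U : Subgroup G) : interIn U ∅ = U := by
  simp [interIn]

lemma interIn_insert (U M : Subgroup G) (E : Set (Subgroup G)) :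
    interIn U (insert M E) = M ⊓ interIn U E := by
  rw [interIn, interIn, sInf_insert, inf_left_comm]

lemma interIn_normal {U : Subgroup G} (hU : U.Normal) {E : Set (Subgroup G)}
    (hE : ∀ M ∈ E, M.Normal) : (interIn U E).Normal := by
  constructor
  intro n hn g
  rw [interIn, Subgroup.mem_inf] at hn ⊢
  refine ⟨hU.conj_mem _ hn.1 g, ?_⟩
  rw [Subgroup.mem_sInf] at hn ⊢
  exact fun M hM => (hE M hM).conj_mem _ (hn.2 M hM) g

variable [Fintype G]

lemma card_div_card {H N : Subgroup G} (h : H ≤ N) :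
    Nat.card N / Nat.card H = H.relIndex N := by
  have h1 : Nat.card (H.subgroupOf N) * (H.subgroupOf N).index = Nat.card N :=
    Subgroup.card_mul_index _
  have h2 : Nat.card (H.subgroupOf N) = Nat.card H :=
    Nat.card_congr (Subgroup.subgroupOfEquivOfLe h).toEquiv
  have hpos : 0 < Nat.card H := Nat.card_pos
  rw [Subgroup.relIndex, ← h1, h2, Nat.mul_div_cancel_left _ hpos]

lemma relindex_pos (H N : Subgroup G) : 0 < H.relIndex N := by
  rw [Subgroup.relIndex]
  exact Nat.pos_of_ne_zero Subgroup.index_ne_zero_of_finite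

lemma one_lt_relindex {M N : Subgroup G} (h : M < N) : 1 < M.relIndex N := by
  refine Nat.one_lt_iff_ne_zero_and_ne_one.mpr ⟨(relindex_pos M N).ne', ?_⟩
  simp only [ne_eq, Subgroup.relIndex_eq_one]
  exact h.not_ge

lemma relindex_inf_of_maxGNormal {N K M : Subgroup G} (hKN : K ≤ N) (hK : K.Normal)
    (hM : M ∈ maxGNormal N) (hKM : ¬K ≤ M) :
    (K ⊓ M).relIndex N = M.relIndex N * K.relIndex N := by
  obtain ⟨hMnorm, hMlt, hMmax⟩ := hM
  haveI := hMnorm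
  haveI := hK
  have hsup : K ⊔ M = N := by
    by_contra hne
    refine hMmax (K ⊔ M) inferInstance ?_ (lt_of_le_of_ne (sup_le hKN hMlt.le) hne)
    exact lt_of_le_of_ne le_sup_right (fun h => hKM (le_sup_left.trans h.ge))
  calc (K ⊓ M).relIndex N = (K ⊓ M).relIndex K * K.relIndex N :=
        (Subgroup.relIndex_mul_relIndex _ _ _ inf_le_left hKN).symm
    _ = M.relIndex N * K.relIndex N := by
        rw [inf_comm K M, Subgroup.inf_relIndex_right]
        congr 1
        rw [← hsup, Subgroup.relIndex_sup_right]

lemma relindex_interIn_le (N : Subgroup G) (E : Set (Subgroup G)) (hfin : E.Finite) :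
    (interIn N E).relIndex N ≤ ∏ᶠ M ∈ E, M.relIndex N := by
  refine Set.Finite.induction_on
    (motive := fun E _ => (interIn N E).relIndex N ≤ ∏ᶠ M ∈ E, M.relIndex N) E hfin ?_ ?_
  · show (interIn N (∅ : Set (Subgroup G))).relIndex N ≤ ∏ᶠ M ∈ (∅ : Set (Subgroup G)), M.relIndex N
    rw [interIn_empty, Subgroup.relIndex_self, finprod_mem_empty]
  · intro a s ha hs ih
    show (interIn N (insert a s)).relIndex N ≤ ∏ᶠ M ∈ insert a s, M.relIndex N
    rw [interIn_insert, finprod_mem_insert _ ha hs]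
    calc (a ⊓ interIn N s).relIndex N ≤ a.relIndex N * (interIn N s).relIndex N :=
          Subgroup.relIndex_inf_le
      _ ≤ a.relIndex N * ∏ᶠ M ∈ s, M.relIndex N := Nat.mul_le_mul_left _ ih

lemma finprod_subset_le {s t : Set (Subgroup G)} (ht : t.Finite) (hsub : s ⊆ t)
    (f : Subgroup G → ℕ) (hf : ∀ M, 1 ≤ f M) :
    ∏ᶠ M ∈ s, f M ≤ ∏ᶠ M ∈ t, f M := by
  have hs := ht.subset hsub
  rw [← Set.Finite.coe_toFinset hs, ← Set.Finite.coe_toFinset ht,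
    finprod_mem_coe_finset, finprod_mem_coe_finset]
  refine Finset.prod_le_prod_of_subset_of_one_le' ?_ ?_
  · intro x hx
    rw [Set.Finite.mem_toFinset] at hx ⊢
    exact hsub hx
  · intro i _ _
    exact hf i

lemma forward {N : Subgroup G} (hN : N.Normal) (ℳ : Set (Subgroup G)) (hfin : ℳ.Finite) :
    ℳ ⊆ maxGNormal N → MinimalInItself N ℳ →
      (interIn N ℳ).relIndex N = ∏ᶠ M ∈ ℳ, M.relIndex N := by
  refine Set.Finite.induction_on
    (motive := fun ℳ _ => ℳ ⊆ maxGNormal N → MinimalInItself N ℳ →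
      (interIn N ℳ).relIndex N = ∏ᶠ M ∈ ℳ, M.relIndex N) ℳ hfin ?_ ?_
  · intro _ _
    rw [interIn_empty, Subgroup.relIndex_self, finprod_mem_empty]
  · intro a s ha hsfin ih hsub hmin
    have hsubs : s ⊆ maxGNormal N := fun M hM => hsub (Set.mem_insert_of_mem a hM)
    have hmins : MinimalInItself N s := by
      intro E hE hcontra
      obtain ⟨x, hxs, hxE⟩ := Set.exists_of_ssubset hE
      have hss : insert a E ⊂ insert a s := by
        refine ⟨Set.insert_subset_insert hE.subset, fun hle => ?_⟩
        rcases hle (Set.mem_insert_of_mem a hxs) with h | h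
        · exact ha (h ▸ hxs)
        · exact hxE h
      exact hmin (insert a E) hss (by rw [interIn_insert, interIn_insert, hcontra])
    have ihs := ih hsubs hmins
    have hKnotle : ¬ interIn N s ≤ a := by
      intro hle
      exact hmin s (Set.ssubset_insert ha)
        (by rw [interIn_insert]; exact (inf_eq_right.2 hle).symm)
    have hKnorm : (interIn N s).Normal := interIn_normal hN (fun M hM => (hsubs hM).1)
    have hstep : (interIn N s ⊓ a).relIndex N
        = a.relIndex N * (interIn N s).relIndex N :=
      relindex_inf_of_maxGNormal (inf_le_left : interIn N s ≤ N) hKnorm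
        (hsub (Set.mem_insert a s)) hKnotle
    rw [interIn_insert, inf_comm a (interIn N s), hstep,
      finprod_mem_insert _ ha hsfin, ihs]

end Aux

/-- Lemma 2.2(i): `ℳ₁ ⊆ ℳ_G(N)` is minimal in itself iff
`|N| / |⋂_{M ∈ ℳ₁} M| = ∏_{M ∈ ℳ₁} |N|/|M|` (empty intersection taken as `N`). -/
theorem stmt_1 {G : Type*} [Group G] [Fintype G] (N : Subgroup G) (hN : N.Normal)
    (ℳ₁ : Set (Subgroup G)) (hℳ₁ : ℳ₁ ⊆ maxGNormal N) :
    MinimalInItself N ℳ₁ ↔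
      Nat.card N / Nat.card (interIn N ℳ₁) = ∏ᶠ M ∈ ℳ₁, Nat.card N / Nat.card M := by
  haveI : Finite (Subgroup G) :=
    Finite.of_injective (fun H : Subgroup G => (H : Set G)) SetLike.coe_injective
  have hfin : ℳ₁.Finite := Set.toFinite ℳ₁
  have hle : ∀ M ∈ ℳ₁, M ≤ N := fun M hM => (hℳ₁ hM).2.1.le
  have hconv : Nat.card N / Nat.card (interIn N ℳ₁) = (interIn N ℳ₁).relIndex N :=
    card_div_card inf_le_left
  have hconv2 : (∏ᶠ M ∈ ℳ₁, Nat.card N / Nat.card M) = ∏ᶠ M ∈ ℳ₁, M.relIndex N :=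
    finprod_mem_congr rfl (fun M hM => card_div_card (hle M hM))
  rw [hconv, hconv2]
  constructor
  · exact forward hN ℳ₁ hfin hℳ₁
  · intro heq E hE hcontra
    obtain ⟨M₀, hM₀, hM₀E⟩ := Set.exists_of_ssubset hE
    have hEfin : E.Finite := hfin.subset hE.subset
    have hEsub : E ⊆ ℳ₁ \ {M₀} := fun x hx =>
      ⟨hE.subset hx, fun h => hM₀E ((Set.mem_singleton_iff.1 h) ▸ hx)⟩
    have h1 : (interIn N E).relIndex N ≤ ∏ᶠ M ∈ E, M.relIndex N :=
      relindex_interIn_le N E hEfin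
    have h2 : (∏ᶠ M ∈ E, M.relIndex N) ≤ ∏ᶠ M ∈ ℳ₁ \ {M₀}, M.relIndex N :=
      finprod_subset_le hfin.diff hEsub _ (fun M => relindex_pos M N)
    have hsplit : (∏ᶠ M ∈ ℳ₁, M.relIndex N)
        = M₀.relIndex N * ∏ᶠ M ∈ ℳ₁ \ {M₀}, M.relIndex N := by
      conv_lhs => rw [← Set.insert_eq_self.mpr hM₀, ← Set.insert_diff_singleton]
      exact finprod_mem_insert _ (fun h => h.2 rfl) hfin.diff
    have key : (interIn N E).relIndex N
        = M₀.relIndex N * ∏ᶠ M ∈ ℳ₁ \ {M₀}, M.relIndex N := by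
      rw [hcontra, heq, hsplit]
    have h2lt : 1 < M₀.relIndex N := one_lt_relindex (hℳ₁ hM₀).2.1
    have hxpos : 0 < (interIn N E).relIndex N := relindex_pos _ _
    have h2p : 2 * (∏ᶠ M ∈ ℳ₁ \ {M₀}, M.relIndex N)
        ≤ ∏ᶠ M ∈ ℳ₁ \ {M₀}, M.relIndex N := by
      calc 2 * (∏ᶠ M ∈ ℳ₁ \ {M₀}, M.relIndex N)
          ≤ M₀.relIndex N * ∏ᶠ M ∈ ℳ₁ \ {M₀}, M.relIndex N :=
            Nat.mul_le_mul_right _ h2lt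
        _ = (interIn N E).relIndex N := key.symm
        _ ≤ ∏ᶠ M ∈ ℳ₁ \ {M₀}, M.relIndex N := h1.trans h2
    have hp0 : (∏ᶠ M ∈ ℳ₁ \ {M₀}, M.relIndex N) = 0 := by omega
    rw [hp0, Nat.mul_zero] at key
    omega
end

section
/- Let G be a finite group and let N, K be normal subgroups of G with K properly contained in N. If ⋂_{M ∈ ℳ_G(N)} M ⊆ K, then K can be expressed as an intersection of some maximal G-normal subgroups of N; moreover K = ⋂_{M ∈ ℳ_G(N,K)} M. -/
section Aux

open scoped Pointwise

variable {G : Type*} [Group G]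

lemma normal_sup' {A B : Subgroup G} (hA : A.Normal) (hB : B.Normal) : (A ⊔ B).Normal := by
  haveI := hA; haveI := hB; exact Subgroup.sup_normal A B

lemma normal_inf' {A B : Subgroup G} (hA : A.Normal) (hB : B.Normal) : (A ⊓ B).Normal := by
  haveI := hA; haveI := hB; exact Subgroup.normal_inf_normal A B

lemma normal_sInf' {S : Set (Subgroup G)} (h : ∀ M ∈ S, M.Normal) : (sInf S).Normal := by
  constructor
  intro n hn g
  rw [Subgroup.mem_sInf] at hn ⊢
  exact fun M hM => (h M hM).conj_mem n (hn M hM) g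

/-- Dedekind modular law, with one factor normal. -/
lemma dedekind {A B C : Subgroup G} (hB : B.Normal) (hAC : A ≤ C) :
    A ⊔ (B ⊓ C) = (A ⊔ B) ⊓ C := by
  haveI := hB
  apply le_antisymm
  · exact sup_le (le_inf le_sup_left hAC) (le_inf (inf_le_left.trans le_sup_right) inf_le_right)
  · intro g hg
    obtain ⟨hg1, hg2⟩ := hg
    have hmem : g ∈ ((A : Set G) * (B : Set G)) := by
      rw [← Subgroup.mul_normal A B]; exact hg1
    obtain ⟨a, ha, b, hb, rfl⟩ := hmem
    have hbC : b ∈ C := by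
      have : a⁻¹ * (a * b) ∈ C := mul_mem (inv_mem (hAC ha)) hg2
      simpa using this
    exact Subgroup.mul_mem_sup ha ⟨hb, hbC⟩

/-- Key lemma: if the meet of the maximal `G`-normal subgroups of `u` lies below `x`, and
`a` covers `x` (in the lattice of normal subgroups), then some maximal `G`-normal subgroup
of `u` contains `x` but not `a`. -/
lemma keyLemma {G : Type*} [Group G] [Fintype G] :
    ∀ u : Subgroup G, u.Normal → ∀ x a : Subgroup G, x.Normal → a.Normal →
    x ≤ u → a ≤ u → x < a → (∀ V : Subgroup G, V.Normal → x < V → ¬ V < a) →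
    interIn u (maxGNormal u) ≤ x →
    ∃ m ∈ maxGNormal u, x ≤ m ∧ ¬ a ≤ m := by
  intro u
  induction u using WellFoundedLT.induction with
  | ind u IH =>
  intro hu x a hx ha hxu hau hxa hcov hR
  -- Step 1: find a maximal G-normal subgroup of u not containing a
  have h1 : ∃ m0 ∈ maxGNormal u, ¬ a ≤ m0 := by
    by_contra hc
    push_neg at hc
    have h2 : a ≤ interIn u (maxGNormal u) := le_inf hau (le_sInf hc)
    exact hxa.not_ge (h2.trans hR)
  obtain ⟨m0, hm0, ham0⟩ := h1
  obtain ⟨hm0n, hm0lt, hm0max⟩ := hm0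
  by_cases hxm0 : x ≤ m0
  · exact ⟨m0, ⟨hm0n, hm0lt, hm0max⟩, hxm0, ham0⟩
  -- x ⊔ m0 = u
  have hsupu : x ⊔ m0 = u := by
    have hle : x ⊔ m0 ≤ u := sup_le hxu hm0lt.le
    have hlt2 : m0 < x ⊔ m0 :=
      lt_of_le_of_ne le_sup_right (fun he => hxm0 (le_sup_left.trans he.ge))
    exact (hle.lt_or_eq).resolve_left (hm0max _ (normal_sup' hx hm0n) hlt2)
  have hx1n : (x ⊓ m0).Normal := normal_inf' hx hm0n
  have ha1n : (a ⊓ m0).Normal := normal_inf' ha hm0n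
  -- a = x ⊔ (a ⊓ m0)
  have hfa : a = x ⊔ (a ⊓ m0) := by
    have hd1 : x ⊔ (m0 ⊓ a) = (x ⊔ m0) ⊓ a := dedekind hm0n hxa.le
    calc a = (x ⊔ m0) ⊓ a := by rw [hsupu, inf_eq_right.mpr hau]
    _ = x ⊔ (m0 ⊓ a) := hd1.symm
    _ = x ⊔ (a ⊓ m0) := by rw [inf_comm m0 a]
  -- x ⊓ m0 < a ⊓ m0
  have hne1 : x ⊓ m0 < a ⊓ m0 := by
    refine (inf_le_inf_right _ hxa.le).lt_of_ne (fun he => ?_)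
    have h' : a ⊓ m0 ≤ x := by rw [← he]; exact inf_le_left
    have : a ≤ x := by
      calc a = x ⊔ (a ⊓ m0) := hfa
      _ ≤ x := sup_le le_rfl h'
    exact hxa.not_ge this
  -- covering is preserved
  have hcov1 : ∀ V : Subgroup G, V.Normal → x ⊓ m0 < V → ¬ V < a ⊓ m0 := by
    intro V hVn hV1 hV2
    have hVm0 : V ≤ m0 := hV2.le.trans inf_le_right
    have hWV : (x ⊔ V) ⊓ m0 = V := by
      have hd : V ⊔ (x ⊓ m0) = (V ⊔ x) ⊓ m0 := dedekind hx hVm0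
      calc (x ⊔ V) ⊓ m0 = (V ⊔ x) ⊓ m0 := by rw [sup_comm x V]
      _ = V ⊔ (x ⊓ m0) := hd.symm
      _ = V := sup_eq_left.mpr hV1.le
    have hWa : x ⊔ V ≤ a := by
      rw [hfa]; exact sup_le le_sup_left (hV2.le.trans le_sup_right)
    rcases eq_or_lt_of_le (le_sup_left : x ≤ x ⊔ V) with heq | hlt2
    · have : V = x ⊓ m0 := by rw [← hWV, ← heq]
      exact hV1.ne' this
    · rcases eq_or_lt_of_le hWa with heq2 | hlt3
      · have : V = a ⊓ m0 := by rw [← hWV, heq2]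
        exact hV2.ne this
      · exact hcov (x ⊔ V) (normal_sup' hx hVn) hlt2 hlt3
  -- hypothesis transfers to m0
  have htrans : interIn m0 (maxGNormal m0) ≤ x ⊓ m0 := by
    have hRM : ∀ M ∈ maxGNormal u, interIn m0 (maxGNormal m0) ≤ M := by
      intro M hM
      obtain ⟨hMn, hMlt, hMmax⟩ := hM
      by_cases hmm : m0 ≤ M
      · have hEq : m0 = M := by
          rcases eq_or_lt_of_le hmm with he | hl
          · exact he
          · exact absurd hMlt (hm0max M hMn hl)
        exact hEq ▸ (inf_le_left : interIn m0 (maxGNormal m0) ≤ m0)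
      · have hC : M ⊓ m0 ∈ maxGNormal m0 := by
          refine ⟨normal_inf' hMn hm0n, lt_of_le_of_ne inf_le_right (fun he => hmm ?_), ?_⟩
          · rw [← he]; exact inf_le_left
          · intro V hVn hV1 hV2
            have hVM : ¬ V ≤ M := fun hh => hV1.not_ge (le_inf hh hV2.le)
            have hMV : M < M ⊔ V :=
              lt_of_le_of_ne le_sup_left (fun he => hVM (le_sup_right.trans he.ge))
            have hnotlt := hMmax _ (normal_sup' hMn hVn) hMV
            have hMVu : M ⊔ V = u :=
              ((sup_le hMlt.le (hV2.le.trans hm0lt.le)).lt_or_eq).resolve_left hnotlt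
            have hd : V ⊔ (M ⊓ m0) = (V ⊔ M) ⊓ m0 := dedekind hMn hV2.le
            rw [sup_eq_left.mpr hV1.le] at hd
            have hm0V : m0 ≤ V := by
              rw [hd, sup_comm V M, hMVu]
              exact le_inf hm0lt.le le_rfl
            exact absurd hV2 hm0V.not_gt
        exact le_trans (inf_le_right.trans (sInf_le hC)) inf_le_left
    have : interIn m0 (maxGNormal m0) ≤ interIn u (maxGNormal u) :=
      le_inf (inf_le_left.trans hm0lt.le) (le_sInf hRM)
    exact le_inf (this.trans hR) inf_le_left
  -- apply induction hypothesis inside m0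
  obtain ⟨m1, hm1mem, hx1m1, ha1m1⟩ :=
    IH m0 hm0lt hm0n (x ⊓ m0) (a ⊓ m0) hx1n ha1n inf_le_right inf_le_right hne1 hcov1 htrans
  obtain ⟨hm1n, hm1lt, hm1max⟩ := hm1mem
  -- (x ⊔ m1) ⊓ m0 = m1
  have g1 : (x ⊔ m1) ⊓ m0 = m1 := by
    have hd : m1 ⊔ (x ⊓ m0) = (m1 ⊔ x) ⊓ m0 := dedekind hx hm1lt.le
    calc (x ⊔ m1) ⊓ m0 = (m1 ⊔ x) ⊓ m0 := by rw [sup_comm x m1]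
    _ = m1 ⊔ (x ⊓ m0) := hd.symm
    _ = m1 := sup_eq_left.mpr hx1m1
  -- (x ⊔ m1) ⊓ a = x
  have hd2 : x ⊔ (m1 ⊓ a) = (x ⊔ m1) ⊓ a := dedekind hm1n hxa.le
  have hm1a : m1 ⊓ a ≤ a ⊓ m0 := le_inf inf_le_right (inf_le_left.trans hm1lt.le)
  have hW'x : x ⊔ (m1 ⊓ a) = x := by
    have hW'a : x ⊔ (m1 ⊓ a) ≤ a := by
      calc x ⊔ (m1 ⊓ a) ≤ x ⊔ (a ⊓ m0) := sup_le le_sup_left (hm1a.trans le_sup_right)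
      _ = a := hfa.symm
    rcases eq_or_lt_of_le (le_sup_left : x ≤ x ⊔ (m1 ⊓ a)) with he | hl
    · exact he.symm
    · rcases eq_or_lt_of_le hW'a with he2 | hl2
      · exfalso
        have ham : a ≤ x ⊔ m1 := by
          rw [← he2]; exact sup_le le_sup_left (inf_le_left.trans le_sup_right)
        have : a ⊓ m0 ≤ m1 := by
          rw [← g1]; exact le_inf (inf_le_left.trans ham) inf_le_right
        exact ha1m1 this
      · exact ((hcov _ (normal_sup' hx (normal_inf' hm1n ha)) hl) hl2).elim
  have g2 : (x ⊔ m1) ⊓ a = x := by rw [← hd2, hW'x]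
  have hnam : ¬ a ≤ x ⊔ m1 := by
    intro hh
    have hax : a ≤ (x ⊔ m1) ⊓ a := le_inf hh le_rfl
    rw [g2] at hax
    exact hxa.not_ge hax
  refine ⟨x ⊔ m1, ⟨normal_sup' hx hm1n, ?_, ?_⟩, le_sup_left, hnam⟩
  · refine lt_of_le_of_ne (sup_le hxu (hm1lt.le.trans hm0lt.le)) (fun he => hnam ?_)
    rw [he]; exact hau
  · intro V hVn hmV hVu
    have hmm0 : (x ⊔ m1) ⊔ m0 = u := by
      rw [sup_assoc, sup_eq_right.mpr hm1lt.le]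
      exact hsupu
    have hd : (x ⊔ m1) ⊔ (m0 ⊓ V) = ((x ⊔ m1) ⊔ m0) ⊓ V := dedekind hm0n hmV.le
    rw [hmm0, inf_eq_right.mpr hVu.le] at hd
    have hm1V : m1 ≤ m0 ⊓ V := le_inf hm1lt.le (le_sup_right.trans hmV.le)
    rcases eq_or_lt_of_le hm1V with he | hl
    · rw [← he] at hd
      have : V = x ⊔ m1 := by rw [← hd, sup_assoc, sup_idem]
      exact hmV.ne' this
    · have hnl := hm1max _ (normal_inf' hm0n hVn) hl
      have hm0V : m0 ⊓ V = m0 := ((inf_le_left : m0 ⊓ V ≤ m0).lt_or_eq).resolve_left hnl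
      have hm0Vle : m0 ≤ V := by rw [← hm0V]; exact inf_le_right
      have hVequ : V = u := le_antisymm hVu.le
        (by rw [← hsupu]; exact sup_le (le_sup_left.trans hmV.le) hm0Vle)
      exact hVu.ne hVequ

end Aux

/-- Lemma 2.3: if `K ⊊ N` are normal subgroups of `G` with `⋂_{M ∈ ℳ_G(N)} M ⊆ K`, then `K`
can be expressed as an intersection of some maximal `G`-normal subgroups of `N`; moreover
`K = ⋂_{M ∈ ℳ_G(N,K)} M`. -/
theorem stmt_3 {G : Type*} [Group G] [Fintype G] (N K : Subgroup G)
    (hN : N.Normal) (hK : K.Normal) (hlt : K < N)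
    (h : interIn N (maxGNormal N) ≤ K) :
    (∃ E : Set (Subgroup G), E ⊆ maxGNormal N ∧ E.Nonempty ∧ interIn N E = K) ∧
      K = interIn N (maxGNormalBtw N K) := by
  have hKT : K ≤ interIn N (maxGNormalBtw N K) :=
    le_inf hlt.le (le_sInf fun M hM => hM.2)
  have hTn : (interIn N (maxGNormalBtw N K)).Normal :=
    normal_inf' hN (normal_sInf' fun M hM => hM.1.1)
  have hTK : interIn N (maxGNormalBtw N K) ≤ K := by
    by_contra hc
    have hKT' : K < interIn N (maxGNormalBtw N K) := hKT.lt_of_ne (fun he => hc he.ge)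
    set S : Set (Subgroup G) :=
      {V | V.Normal ∧ K < V ∧ V ≤ interIn N (maxGNormalBtw N K)} with hSdef
    obtain ⟨a, haS, hamin⟩ := (Set.toFinite S).exists_minimal
      ⟨interIn N (maxGNormalBtw N K), hTn, hKT', le_rfl⟩
    obtain ⟨han, hKa, haT⟩ := haS
    have hcov : ∀ V : Subgroup G, V.Normal → K < V → ¬ V < a := by
      intro V hVn hKV hVa
      exact hVa.ne (le_antisymm (hamin ⟨hVn, hKV, hVa.le.trans haT⟩ hVa.le) hVa.le).symm
    obtain ⟨m, hm, hKm, ham⟩ := keyLemma N hN K a hK han hlt.le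
      (haT.trans (inf_le_left : interIn N (maxGNormalBtw N K) ≤ N)) hKa hcov h
    have hTm : interIn N (maxGNormalBtw N K) ≤ m :=
      (inf_le_right : interIn N (maxGNormalBtw N K) ≤ _).trans (sInf_le ⟨hm, hKm⟩)
    exact ham (haT.trans hTm)
  have hKeq : K = interIn N (maxGNormalBtw N K) := le_antisymm hKT hTK
  have hEne : (maxGNormalBtw N K).Nonempty := by
    rcases Set.eq_empty_or_nonempty (maxGNormalBtw N K) with he | hne
    · exfalso
      have hTN : interIn N (maxGNormalBtw N K) = N := by
        rw [he]; unfold interIn; rw [sInf_empty, inf_top_eq]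
      exact hlt.ne (hKeq.trans hTN)
    · exact hne
  exact ⟨⟨maxGNormalBtw N K, fun M hM => hM.1, hEne, hKeq.symm⟩, hKeq⟩
end

section
/- Let G be a finite group and let x ∈ G. Then |[x^G]| = ∑_{V normal in G, V ⊆ ⟨x^G⟩} |V| · μ_G(V, ⟨x^G⟩). -/
/-- The group-theoretic Möbius function `μ_G(V, U)`:
`∑_{E ⊆ ℳ_G(U,V), ⋂_{M ∈ E} M = V} (-1)^{|E|}`, empty intersection taken as `U`. -/
noncomputable def muG {G : Type*} [Group G] (V U : Subgroup G) : ℤ :=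
  ∑ᶠ E ∈ {E : Set (Subgroup G) | E ⊆ maxGNormalBtw U V ∧ interIn U E = V}, (-1 : ℤ) ^ E.ncard

lemma aux_normal_interIn7 {G : Type*} [Group G] {N : Subgroup G} (hN : N.Normal)
    {E : Set (Subgroup G)} (hE : ∀ M ∈ E, (M : Subgroup G).Normal) : (interIn N E).Normal := by
  constructor
  intro n hn g
  rw [interIn, Subgroup.mem_inf, Subgroup.mem_sInf] at hn ⊢
  exact ⟨hN.conj_mem _ hn.1 g, fun M hM => (hE M hM).conj_mem _ (hn.2 M hM) g⟩

lemma aux_mem_max7 {G : Type*} [Group G] [Finite (Subgroup G)] {N : Subgroup G}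
    (hN : N.Normal) (y : G) :
    (Subgroup.normalClosure {y} = N) ↔ (y ∈ N ∧ ∀ M ∈ maxGNormal N, y ∉ M) := by
  constructor
  · rintro rfl
    refine ⟨Subgroup.subset_normalClosure rfl, ?_⟩
    intro M hM hyM
    haveI := hM.1
    have h1 : Subgroup.normalClosure {y} ≤ M :=
      Subgroup.normalClosure_le_normal (by simpa using hyM)
    exact absurd (lt_of_le_of_lt h1 hM.2.1) (lt_irrefl _)
  · rintro ⟨hyN, hmax⟩
    haveI := hN
    have hle : Subgroup.normalClosure {y} ≤ N :=
      Subgroup.normalClosure_le_normal (by simpa using hyN)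
    by_contra hne
    have hlt : Subgroup.normalClosure {y} < N := lt_of_le_of_ne hle hne
    set S : Set (Subgroup G) := {V | V.Normal ∧ Subgroup.normalClosure {y} ≤ V ∧ V < N} with hS
    have hSne : S.Nonempty := ⟨_, Subgroup.normalClosure_normal, le_refl _, hlt⟩
    obtain ⟨M, hMS, hMmax⟩ := Set.Finite.exists_maximalFor id S S.toFinite hSne
    refine hmax M ⟨hMS.1, hMS.2.2, ?_⟩ (hMS.2.1 (Subgroup.subset_normalClosure rfl))
    intro V hV hMV hVN
    have hVS : V ∈ S := ⟨hV, le_trans hMS.2.1 hMV.le, hVN⟩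
    exact absurd (hMmax hVS hMV.le) (not_le_of_gt hMV)

open Classical in
lemma aux_muG_eq7 {G : Type*} [Group G] [Fintype G] {N V : Subgroup G} :
    muG V N = ∑ F ∈ (Set.Finite.toFinset (Set.toFinite (maxGNormal N))).powerset.filter
        (fun F : Finset (Subgroup G) => interIn N (↑F : Set (Subgroup G)) = V),
      (-1 : ℤ) ^ F.card := by
  classical
  rw [muG, finsum_mem_eq_finite_toFinset_sum _ (Set.toFinite _)]
  refine Finset.sum_nbij' (fun E : Set (Subgroup G) => Set.Finite.toFinset (Set.toFinite E))
    (fun F : Finset (Subgroup G) => (↑F : Set (Subgroup G))) ?_ ?_ ?_ ?_ ?_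
  · intro E hE
    rw [Set.Finite.mem_toFinset] at hE
    rw [Finset.mem_filter, Finset.mem_powerset]
    constructor
    · intro M hM
      rw [Set.Finite.mem_toFinset] at hM ⊢
      exact (hE.1 hM).1
    · rw [Set.Finite.coe_toFinset]
      exact hE.2
  · intro F hF
    rw [Finset.mem_filter, Finset.mem_powerset] at hF
    rw [Set.Finite.mem_toFinset]
    constructor
    · intro M hM
      have hM' : M ∈ maxGNormal N := by
        have := hF.1 hM
        rwa [Set.Finite.mem_toFinset] at this
      refine ⟨hM', ?_⟩
      rw [← hF.2]
      exact le_trans inf_le_right (sInf_le hM)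
    · exact hF.2
  · intro E _; exact Set.Finite.coe_toFinset _
  · intro F _; exact Finset.finite_toSet_toFinset F
  · intro E _
    rw [Set.ncard_eq_toFinset_card _ (Set.toFinite E)]

open Classical in
lemma aux_inner_sum7 {G : Type*} [Group G] [Fintype G] {N : Subgroup G} (hN : N.Normal) (y : G) :
    ∑ F ∈ ((maxGNormal N).toFinite.toFinset).powerset,
        (-1 : ℤ) ^ F.card * (if y ∈ interIn N (↑F : Set (Subgroup G)) then 1 else 0)
      = if Subgroup.normalClosure {y} = N then 1 else 0 := by
  classical
  set ℳf := (maxGNormal N).toFinite.toFinset with hℳf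
  have hmem : ∀ F : Finset (Subgroup G),
      y ∈ interIn N (↑F : Set (Subgroup G)) ↔ (y ∈ N ∧ ∀ M ∈ F, y ∈ M) := by
    intro F
    rw [interIn, Subgroup.mem_inf, Subgroup.mem_sInf]
    simp
  have step1 : ∀ F ∈ ℳf.powerset,
      (-1 : ℤ) ^ F.card * (if y ∈ interIn N (↑F : Set (Subgroup G)) then 1 else 0)
        = (if y ∈ N then (1 : ℤ) else 0) * ∏ M ∈ F, ((-1) * (if y ∈ M then (1 : ℤ) else 0)) := by
    intro F _
    rw [Finset.prod_mul_distrib, Finset.prod_const, Finset.prod_boole]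
    by_cases h1 : y ∈ N <;> by_cases h2 : ∀ M ∈ F, y ∈ M <;>
      simp [hmem F, h1, h2]
  calc ∑ F ∈ ℳf.powerset,
        (-1 : ℤ) ^ F.card * (if y ∈ interIn N (↑F : Set (Subgroup G)) then 1 else 0)
      = ∑ F ∈ ℳf.powerset,
          (if y ∈ N then (1 : ℤ) else 0) * ∏ M ∈ F, ((-1) * (if y ∈ M then (1 : ℤ) else 0)) :=
        Finset.sum_congr rfl step1
    _ = (if y ∈ N then (1 : ℤ) else 0) * ∑ F ∈ ℳf.powerset,
          (∏ M ∈ F, ((-1) * (if y ∈ M then (1 : ℤ) else 0))) * ∏ M ∈ ℳf \ F, (1 : ℤ) := by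
        rw [← Finset.mul_sum]; simp
    _ = (if y ∈ N then (1 : ℤ) else 0) * ∏ M ∈ ℳf, ((-1) * (if y ∈ M then (1 : ℤ) else 0) + 1) := by
        rw [← Finset.prod_add]
    _ = (if y ∈ N then (1 : ℤ) else 0) * ∏ M ∈ ℳf, (if y ∉ M then (1 : ℤ) else 0) := by
        congr 1
        refine Finset.prod_congr rfl fun M _ => ?_
        by_cases h : y ∈ M <;> simp [h]
    _ = (if y ∈ N then (1 : ℤ) else 0) * (if ∀ M ∈ ℳf, y ∉ M then 1 else 0) := by
        rw [Finset.prod_boole]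
        congr 1
        split_ifs <;> rfl
    _ = if Subgroup.normalClosure {y} = N then 1 else 0 := by
        have hm : (∀ M ∈ ℳf, y ∉ M) ↔ ∀ M ∈ maxGNormal N, y ∉ M := by
          constructor <;> intro h M hM
          · exact h M (by rw [hℳf, Set.Finite.mem_toFinset]; exact hM)
          · exact h M (by rwa [hℳf, Set.Finite.mem_toFinset] at hM)
        rw [aux_mem_max7 hN y]
        by_cases h1 : y ∈ N <;> by_cases h2 : ∀ M ∈ maxGNormal N, y ∉ M <;>
          simp [h1, h2, hm]

open Classical in
lemma aux_card7 {G : Type*} [Group G] [Fintype G] (H : Subgroup G) :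
    (Nat.card H : ℤ) = ∑ y : G, if y ∈ H then (1 : ℤ) else 0 := by
  classical
  rw [Finset.sum_boole, Nat.card_eq_fintype_card]
  norm_cast
  rw [Fintype.card_subtype]

/-- Lemma 3.4: `|[x^G]| = ∑_{V normal in G, V ⊆ ⟨x^G⟩} |V| · μ_G(V, ⟨x^G⟩)`, where
`[x^G] = {y : ⟨y^G⟩ = ⟨x^G⟩}` and `⟨x^G⟩` is the normal closure of `x`. -/
theorem stmt_7 {G : Type*} [Group G] [Fintype G] (x : G) :
    (({y : G | Subgroup.normalClosure {y} = Subgroup.normalClosure {x}}).ncard : ℤ) =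
      ∑ᶠ V ∈ {V : Subgroup G | V.Normal ∧ V ≤ Subgroup.normalClosure {x}},
        (Nat.card V : ℤ) * muG V (Subgroup.normalClosure {x}) := by
  classical
  set N := Subgroup.normalClosure ({x} : Set G) with hNdef
  have hN : N.Normal := Subgroup.normalClosure_normal
  set ℳf : Finset (Subgroup G) := (maxGNormal N).toFinite.toFinset with hℳf
  set Vs : Set (Subgroup G) := {V : Subgroup G | V.Normal ∧ V ≤ N} with hVs
  rw [finsum_mem_eq_finite_toFinset_sum _ Vs.toFinite]
  have hmap : ∀ F ∈ ℳf.powerset, interIn N (↑F : Set (Subgroup G)) ∈ Vs.toFinite.toFinset := by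
    intro F hF
    rw [Finset.mem_powerset] at hF
    rw [Set.Finite.mem_toFinset]
    refine ⟨aux_normal_interIn7 hN ?_, inf_le_left⟩
    intro M hM
    have : M ∈ ℳf := hF (by simpa using hM)
    rw [hℳf, Set.Finite.mem_toFinset] at this
    exact this.1
  have key : ∑ V ∈ Vs.toFinite.toFinset, (Nat.card V : ℤ) * muG V N
      = ∑ F ∈ ℳf.powerset, (Nat.card (interIn N (↑F : Set (Subgroup G))) : ℤ) * (-1) ^ F.card := by
    rw [← Finset.sum_fiberwise_of_maps_to hmap
      (fun F => (Nat.card (interIn N (↑F : Set (Subgroup G))) : ℤ) * (-1) ^ F.card)]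
    refine Finset.sum_congr rfl fun V _ => ?_
    rw [aux_muG_eq7, Finset.mul_sum]
    refine Finset.sum_congr rfl fun F hF => ?_
    rw [Finset.mem_filter] at hF
    rw [hF.2]
  rw [key]
  have expand : ∑ F ∈ ℳf.powerset, (Nat.card (interIn N (↑F : Set (Subgroup G))) : ℤ) * (-1) ^ F.card
      = ∑ y : G, ∑ F ∈ ℳf.powerset,
          (-1 : ℤ) ^ F.card * (if y ∈ interIn N (↑F : Set (Subgroup G)) then 1 else 0) := by
    rw [Finset.sum_comm]
    refine Finset.sum_congr rfl fun F _ => ?_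
    rw [aux_card7, Finset.sum_mul]
    refine Finset.sum_congr rfl fun y _ => ?_
    ring
  rw [expand]
  have hinner : ∀ y : G, ∑ F ∈ ℳf.powerset,
      (-1 : ℤ) ^ F.card * (if y ∈ interIn N (↑F : Set (Subgroup G)) then 1 else 0)
        = if Subgroup.normalClosure {y} = N then 1 else 0 := fun y => aux_inner_sum7 hN y
  rw [Finset.sum_congr rfl fun y _ => hinner y]
  rw [Finset.sum_boole]
  rw [Set.ncard_eq_toFinset_card']
  norm_cast
  rw [Set.toFinset_setOf]
end

section
/- Let G be a finite group and let S ⊆ G be a subset closed under inverses and closed under conjugation (i.e., a union of conjugacy classes). Let χ be the character of a finite-dimensional irreducible complex representation of G. Then λ_χ := (1/χ(1)) ∑_{s ∈ S} χ(s) is an eigenvalue of the adjacency matrix A of the Cayley graph Cay(G,S), where A is the G×G matrix over ℂ with A(a,b) = 1 if b·a⁻¹ ∈ S and A(a,b) = 0 otherwise. -/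
/-- The character of a finite-dimensional complex representation `ρ` of `G`:
`χ(g) = Tr(ρ(g))`. -/
noncomputable def repChar {G W : Type*} [Group G] [AddCommGroup W] [Module ℂ W]
    (ρ : Representation ℂ G W) (g : G) : ℂ :=
  LinearMap.trace ℂ W (ρ g)

/-- Babai's theorem (Theorem 1.1): for a finite group `G`, a subset `S ⊆ G` closed under
inverses and conjugation, and the character `χ` of a finite-dimensional irreducible complex
representation `ρ` of `G`, the number `λ_χ = (1/χ(1)) ∑_{s ∈ S} χ(s)` is an eigenvalue of the
adjacency matrix `A` of the Cayley graph `Cay(G, S)`, where `A(a,b) = 1` if `b·a⁻¹ ∈ S` and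
`A(a,b) = 0` otherwise. -/
theorem stmt_17 {G : Type*} [Group G] [Fintype G] {W : Type*} [AddCommGroup W] [Module ℂ W]
    [FiniteDimensional ℂ W] [Nontrivial W]
    (ρ : Representation ℂ G W)
    (hirr : ∀ U : Submodule ℂ W, (∀ g : G, ∀ w ∈ U, ρ g w ∈ U) → U = ⊥ ∨ U = ⊤)
    (S : Set G) (hinv : ∀ s ∈ S, s⁻¹ ∈ S) (hconj : ∀ g : G, ∀ s ∈ S, g * s * g⁻¹ ∈ S) :
    ∃ v : G → ℂ, v ≠ 0 ∧
      (Matrix.of fun a b : G => S.indicator (fun _ => (1 : ℂ)) (b * a⁻¹)).mulVec v =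
        (1 / repChar ρ 1 * ∑ᶠ s ∈ S, repChar ρ s) • v := by
  classical
  -- χ(1) = dim W ≠ 0
  have hχ1 : repChar ρ 1 = (Module.finrank ℂ W : ℂ) := by
    simp [repChar, LinearMap.trace_one]
  have hn0 : repChar ρ 1 ≠ 0 := by
    rw [hχ1]
    exact_mod_cast Nat.cast_ne_zero.mpr (Module.finrank_pos (R := ℂ) (M := W)).ne'
  -- the finset version of S
  set Sf : Finset G := (Set.toFinite S).toFinset with hSf
  have hmem : ∀ s, s ∈ Sf ↔ s ∈ S := fun s => (Set.toFinite S).mem_toFinset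
  -- the operator T = ∑_{s ∈ S} ρ s
  set T : Module.End ℂ W := ∑ s ∈ Sf, ρ s with hT
  have hcomm : ∀ g : G, T * ρ g = ρ g * T := by
    intro g
    rw [hT, Finset.sum_mul, Finset.mul_sum]
    refine Finset.sum_nbij' (fun s => g⁻¹ * s * g) (fun s => g * s * g⁻¹) ?_ ?_ ?_ ?_ ?_
    · intro s hs
      rw [hmem] at hs ⊢
      simpa using hconj g⁻¹ s hs
    · intro s hs
      rw [hmem] at hs ⊢
      exact hconj g s hs
    · intro s _; group
    · intro s _; group
    · intro s _
      rw [← map_mul, ← map_mul]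
      congr 1
      group
  -- T has an eigenvalue μ, and by irreducibility T = μ • id
  obtain ⟨μ, hμ⟩ := Module.End.exists_eigenvalue T
  have hEinv : ∀ g : G, ∀ w ∈ Module.End.eigenspace T μ, ρ g w ∈ Module.End.eigenspace T μ := by
    intro g w hw
    rw [Module.End.mem_eigenspace_iff] at hw ⊢
    have h1 : T (ρ g w) = ρ g (T w) := by
      have := congrArg (fun f : Module.End ℂ W => f w) (hcomm g)
      simpa using this
    rw [h1, hw, map_smul]
  have hEtop : Module.End.eigenspace T μ = ⊤ := by
    rcases hirr _ hEinv with h | h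
    · exact absurd h hμ
    · exact h
  have hscal : ∀ w : W, T w = μ • w := by
    intro w
    have : w ∈ Module.End.eigenspace T μ := hEtop ▸ Submodule.mem_top
    rwa [Module.End.mem_eigenspace_iff] at this
  -- the eigenvalue λ equals μ
  have htrT : LinearMap.trace ℂ W T = μ * repChar ρ 1 := by
    have hTeq : T = μ • (1 : Module.End ℂ W) := by
      ext w; simp [hscal w]
    rw [hTeq, map_smul, hχ1]
    simp [LinearMap.trace_one, mul_comm]
  have hsum : ∑ᶠ s ∈ S, repChar ρ s = ∑ s ∈ Sf, repChar ρ s := by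
    rw [← (Set.toFinite S).coe_toFinset, finsum_mem_coe_finset]
  have hlam : 1 / repChar ρ 1 * ∑ᶠ s ∈ S, repChar ρ s = μ := by
    rw [hsum]
    have : ∑ s ∈ Sf, repChar ρ s = LinearMap.trace ℂ W T := by
      rw [hT, map_sum]; rfl
    rw [this, htrT]
    field_simp
  -- the eigenvector
  refine ⟨fun a => repChar ρ a, ?_, ?_⟩
  · intro h
    exact hn0 (congrFun h 1)
  · funext a
    rw [hlam]
    -- LHS = ∑_b 1_S(b a⁻¹) χ(b); substitute b = s * a
    have hbij : Function.Bijective (fun s : G => s * a) :=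
      (Equiv.mulRight a).bijective
    calc (Matrix.of fun a b : G => S.indicator (fun _ => (1 : ℂ)) (b * a⁻¹)).mulVec
            (fun a => repChar ρ a) a
        = ∑ b : G, S.indicator (fun _ => (1 : ℂ)) (b * a⁻¹) * repChar ρ b := by
          simp [Matrix.mulVec, dotProduct]
      _ = ∑ s : G, S.indicator (fun _ => (1 : ℂ)) s * repChar ρ (s * a) := by
          rw [← Fintype.sum_bijective _ hbij]
          intro s
          simp [mul_assoc]
      _ = ∑ s ∈ Sf, repChar ρ (s * a) := by
          simp only [Set.indicator_apply, ite_mul, one_mul, zero_mul]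
          rw [← Finset.sum_filter]
          congr 1
          ext s
          simp [hmem]
      _ = LinearMap.trace ℂ W (T * ρ a) := by
          rw [hT, Finset.sum_mul, map_sum]
          congr 1
          ext s
          rw [← map_mul]
          rfl
      _ = μ * repChar ρ a := by
          have : T * ρ a = μ • (ρ a) := by
            ext w; simp [Module.End.mul_apply, hscal]
          rw [this, map_smul]
          rfl
      _ = (μ • fun a => repChar ρ a) a := rfl
end
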